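/- Let G be a locally compact Hausdorff group, K a compact subgroup of G, and β a strongly continuous action of G by *-automorphisms on a C*-algebra B. Then evaluation at the identity coset, F ↦ F(eK), is a *-isomorphism from C₀(G/K ×_G B) onto the fixed-point algebra B^K. -/

import Mathlib

/-- The generalized fixed-point algebra `C₀(X ×_Γ B)`:  bounded continuous
functions `F : X → B` with `F (g • x) = g • F x`, such that the induced
function `‖F(·)‖` on the orbit space vanishes at infinity.  (Operations are
pointwise, the norm is the supremum norm.) -/
def IndAlg (Γ X B : Type*) [Group Γ] [TopologicalSpace X] [MulAction Γ X]
    [SMul Γ B] [TopologicalSpace B] [Norm B] : Set (X → B) :=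
  {F | Continuous F ∧ (∀ (g : Γ) (x : X), F (g • x) = g • F x) ∧
    (∃ C : ℝ, ∀ x : X, ‖F x‖ ≤ C) ∧
    ∀ ε : ℝ, 0 < ε → ∃ K : Set (Quotient (MulAction.orbitRel Γ X)), IsCompact K ∧
      ∀ x : X, Quotient.mk (MulAction.orbitRel Γ X) x ∉ K → ‖F x‖ < ε}

section aux
variable {G B : Type*} [Group G]
    [NormedRing B] [StarRing B] [CStarRing B] [NormedAlgebra ℂ B]
    [StarModule ℂ B] [CompleteSpace B]
    [MulSemiringAction G B] [SMulCommClass G ℂ B]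

/-- An automorphism of a C*-algebra coming from a group action that respects
the star operation is isometric. -/
lemma norm_g_smul (hstar : ∀ (g : G) (b : B), g • (star b) = star (g • b))
    (g : G) (b : B) : ‖g • b‖ = ‖b‖ := by
  letI : CStarAlgebra B := { }
  let φ : B →⋆ₙₐ[ℂ] B :=
    { toFun := (g • ·)
      map_smul' := fun c x => (smul_comm g c x)
      map_zero' := smul_zero g
      map_add' := smul_add g
      map_mul' := fun x y => smul_mul' g x y
      map_star' := fun x => hstar g x }
  have hφ : Function.Injective φ := fun x y h => by
    have := congrArg (g⁻¹ • ·) h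
    simpa [φ, inv_smul_smul] using this
  exact NonUnitalStarAlgHom.norm_map φ hφ b
end aux

/-- Let `G` be a locally compact Hausdorff group, `K` a compact subgroup of
`G`, and `β` a strongly continuous action of `G` by `*`-automorphisms on a
C*-algebra `B`.  Then evaluation at the identity coset, `F ↦ F(eK)`, is a
`*`-isomorphism from `C₀(G/K ×_G B)` onto the fixed-point algebra `B^K`:
it is a bijection of `C₀(G/K ×_G B)` onto `B^K` which respects the
(pointwise) sums, products, adjoints and scalar multiples. -/
theorem evaluation_at_identity_coset_iso
    (G : Type*) [Group G] [TopologicalSpace G] [IsTopologicalGroup G]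
    [LocallyCompactSpace G] [T2Space G]
    (K : Subgroup G) (hK : IsCompact (K : Set G))
    (B : Type*) [NormedRing B] [StarRing B] [CStarRing B] [NormedAlgebra ℂ B]
    [StarModule ℂ B] [CompleteSpace B]
    [MulSemiringAction G B] [SMulCommClass G ℂ B]
    (hstar : ∀ (g : G) (b : B), g • (star b) = star (g • b))
    (hcont : ∀ b : B, Continuous fun g : G => g • b) :
    Set.BijOn (fun F : (G ⧸ K) → B => F (QuotientGroup.mk (1 : G)))
      (IndAlg G (G ⧸ K) B) {b : B | ∀ k : ↥K, (k : G) • b = b} ∧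
    (∀ F₁ F₂ : (G ⧸ K) → B,
      (F₁ + F₂) (QuotientGroup.mk (1 : G))
          = F₁ (QuotientGroup.mk (1 : G)) + F₂ (QuotientGroup.mk (1 : G)) ∧
      (F₁ * F₂) (QuotientGroup.mk (1 : G))
          = F₁ (QuotientGroup.mk (1 : G)) * F₂ (QuotientGroup.mk (1 : G))) ∧
    (∀ F : (G ⧸ K) → B,
      (star F) (QuotientGroup.mk (1 : G)) = star (F (QuotientGroup.mk (1 : G)))) ∧
    (∀ (a : ℂ) (F : (G ⧸ K) → B),
      (a • F) (QuotientGroup.mk (1 : G)) = a • F (QuotientGroup.mk (1 : G))) := by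
  have key : ∀ g : G, (QuotientGroup.mk g : G ⧸ K) = g • QuotientGroup.mk (1 : G) := by
    intro g
    rw [MulAction.Quotient.smul_mk, smul_eq_mul, mul_one]
  refine ⟨⟨?_, ?_, ?_⟩, fun F₁ F₂ => ⟨rfl, rfl⟩, fun F => rfl, fun a F => rfl⟩
  · -- MapsTo
    rintro F ⟨-, heq, -, -⟩ k
    have hk : ((k : G) • (QuotientGroup.mk (1 : G) : G ⧸ K)) = QuotientGroup.mk (1 : G) := by
      rw [MulAction.Quotient.smul_mk, smul_eq_mul, mul_one]
      exact QuotientGroup.eq.mpr (by simpa using k.2)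
    calc (k : G) • F (QuotientGroup.mk (1 : G))
        = F ((k : G) • QuotientGroup.mk (1 : G)) := (heq _ _).symm
      _ = F (QuotientGroup.mk (1 : G)) := by rw [hk]
  · -- InjOn
    rintro F₁ ⟨-, h₁, -, -⟩ F₂ ⟨-, h₂, -, -⟩ h
    funext x
    induction x using Quotient.inductionOn' with
    | h g =>
      show F₁ (QuotientGroup.mk g) = F₂ (QuotientGroup.mk g)
      rw [key g, h₁, h₂]
      exact congrArg (g • ·) h
  · -- SurjOn
    rintro b hb
    have hwd : ∀ g₁ g₂ : G, (QuotientGroup.leftRel K).r g₁ g₂ →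
        g₁ • b = g₂ • b := by
      intro g₁ g₂ h
      rw [QuotientGroup.leftRel_apply] at h
      have : g₂ = g₁ * (g₁⁻¹ * g₂) := by group
      rw [this, mul_smul, hb ⟨_, h⟩]
    refine ⟨fun x => Quotient.liftOn' x (fun g => g • b) hwd, ⟨?_, ?_, ?_, ?_⟩, one_smul G b⟩
    · rw [isQuotientMap_quotient_mk'.continuous_iff]
      exact hcont b
    · intro g x
      induction x using Quotient.inductionOn' with
      | h h =>
        show (fun x : G ⧸ K => Quotient.liftOn' x (fun g => g • b) hwd)
            (g • QuotientGroup.mk h) = _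
        rw [MulAction.Quotient.smul_mk]
        show (g • h) • b = g • (h • b)
        rw [smul_eq_mul, mul_smul]
    · refine ⟨‖b‖, fun x => ?_⟩
      induction x using Quotient.inductionOn' with
      | h g => exact le_of_eq (norm_g_smul hstar g b)
    · intro ε hε
      refine ⟨{Quotient.mk _ (QuotientGroup.mk (1 : G))}, isCompact_singleton, fun x hx => ?_⟩
      exfalso
      apply hx
      induction x using Quotient.inductionOn' with
      | h g =>
        exact Set.mem_singleton_iff.mpr (Quotient.sound ⟨g, (key g).symm⟩)
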